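/- If M is an uncountable closed subset of the unit interval [0,1], then there exists a strictly increasing (hence injective) function from [0,1] into M. -/

import Mathlib

open Set

private lemma not_countable_nonempty {S : Set ℝ} (h : ¬ S.Countable) : S.Nonempty :=
  Set.nonempty_iff_ne_empty.2 (fun he => h (he ▸ Set.countable_empty))

private lemma split_exists (M : Set ℝ) (hsub : M ⊆ Icc 0 1) (hclosed : IsClosed M)
    (S : Set ℝ) (hS : S ⊆ M) (hunc : ¬ S.Countable) :
    ∃ m ∈ M, ¬(S ∩ Iio m).Countable ∧ ¬(S ∩ Ioi m).Countable := by
  have hSIcc : S ⊆ Icc 0 1 := hS.trans hsub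
  set A : Set ℝ := {e : ℝ | (S ∩ Iio e).Countable} with hA
  have hA0 : (0:ℝ) ∈ A := by
    have : S ∩ Iio 0 ⊆ (∅ : Set ℝ) := fun x hx => absurd hx.2 (not_lt.2 (hSIcc hx.1).1)
    exact Set.Countable.mono this Set.countable_empty
  have hAne : A.Nonempty := ⟨0, hA0⟩
  have hAbdd : BddAbove A := by
    refine ⟨2, fun e he => ?_⟩
    by_contra hlt
    push_neg at hlt
    have : S ∩ Iio e = S := by
      apply Set.inter_eq_left.2
      exact fun x hx => lt_of_le_of_lt (hSIcc hx).2 (by linarith)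
    exact hunc (this ▸ he)
  set a := sSup A with ha
  -- the left part at a is countable
  have hleft : (S ∩ Iio a).Countable := by
    have hsubU : S ∩ Iio a ⊆ ⋃ q : {q : ℚ // (q:ℝ) < a}, S ∩ Iio (q:ℝ) := by
      intro x hx
      obtain ⟨q, hq1, hq2⟩ := exists_rat_btwn (mem_Iio.1 hx.2)
      exact Set.mem_iUnion.2 ⟨⟨q, hq2⟩, hx.1, hq1⟩
    refine Set.Countable.mono hsubU (Set.countable_iUnion ?_)
    rintro ⟨q, hq⟩
    obtain ⟨e, he, hqe⟩ := exists_lt_of_lt_csSup hAne hq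
    have he' : (S ∩ Iio e).Countable := he
    have hss : S ∩ Iio (q:ℝ) ⊆ S ∩ Iio e :=
      fun x hx => ⟨hx.1, lt_trans (mem_Iio.1 hx.2) hqe⟩
    exact Set.Countable.mono hss he'
  -- find e > a with right part uncountable
  have hex : ∃ e, a < e ∧ ¬(S ∩ Ioi e).Countable := by
    by_contra hc
    push_neg at hc
    have hright : (S ∩ Ioi a).Countable := by
      have hsubU : S ∩ Ioi a ⊆ ⋃ q : {q : ℚ // a < (q:ℝ)}, S ∩ Ioi (q:ℝ) := by
        intro x hx
        obtain ⟨q, hq1, hq2⟩ := exists_rat_btwn (mem_Ioi.1 hx.2)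
        exact Set.mem_iUnion.2 ⟨⟨q, hq1⟩, hx.1, hq2⟩
      refine Set.Countable.mono hsubU (Set.countable_iUnion ?_)
      rintro ⟨q, hq⟩
      exact hc _ hq
    have : S ⊆ (S ∩ Iio a) ∪ ({a} ∪ (S ∩ Ioi a)) := by
      intro x hx
      rcases lt_trichotomy x a with h | h | h
      · exact Or.inl ⟨hx, h⟩
      · exact Or.inr (Or.inl h)
      · exact Or.inr (Or.inr ⟨hx, h⟩)
    exact hunc (Set.Countable.mono this
      ((hleft.union ((Set.countable_singleton a).union hright))))
  obtain ⟨e, hae, hrightunc⟩ := hex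
  have hleftunc : ¬(S ∩ Iio e).Countable := by
    intro h
    exact absurd (le_csSup hAbdd h) (not_le.2 hae)
  -- now take m = sSup (S ∩ Iio e)
  have hne : (S ∩ Iio e).Nonempty := not_countable_nonempty hleftunc
  have hbdd : BddAbove (S ∩ Iio e) := ⟨1, fun x hx => (hSIcc hx.1).2⟩
  set m := sSup (S ∩ Iio e) with hm
  have hmM : m ∈ M := by
    have h1 : m ∈ closure (S ∩ Iio e) := csSup_mem_closure hne hbdd
    have h2 : closure (S ∩ Iio e) ⊆ closure M :=
      closure_mono ((Set.inter_subset_left).trans hS)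
    exact hclosed.closure_eq ▸ h2 h1
  have hme : m ≤ e := csSup_le hne (fun x hx => le_of_lt hx.2)
  refine ⟨m, hmM, ?_, ?_⟩
  · intro h
    apply hleftunc
    have : S ∩ Iio e ⊆ (S ∩ Iio m) ∪ {m} := by
      intro x hx
      rcases eq_or_lt_of_le (le_csSup hbdd hx) with h1 | h1
      · exact Set.mem_union_right _ h1
      · exact Set.mem_union_left _ ⟨hx.1, h1⟩
    exact Set.Countable.mono this (h.union (Set.countable_singleton m))
  · intro h
    have hss : S ∩ Ioi e ⊆ S ∩ Ioi m :=
      fun x hx => ⟨hx.1, lt_of_le_of_lt hme (mem_Ioi.1 hx.2)⟩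
    exact hrightunc (Set.Countable.mono hss h)
open Classical in
private noncomputable def bpick (M S : Set ℝ) : ℝ :=
  if h : ∃ m ∈ M, ¬(S ∩ Set.Iio m).Countable ∧ ¬(S ∩ Set.Ioi m).Countable then h.choose
  else 0

private lemma bpick_spec {M S : Set ℝ}
    (h : ∃ m ∈ M, ¬(S ∩ Set.Iio m).Countable ∧ ¬(S ∩ Set.Ioi m).Countable) :
    bpick M S ∈ M ∧ ¬(S ∩ Set.Iio (bpick M S)).Countable ∧
      ¬(S ∩ Set.Ioi (bpick M S)).Countable := by
  classical
  rw [bpick]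
  rw [dif_pos h]
  exact h.choose_spec

private noncomputable def bscheme (M : Set ℝ) : ℕ → ℕ → Set ℝ
  | 0, _ => M ∩ Set.Ioi (bpick M M)
  | n+1, k =>
      bscheme M n (k / 2) ∩
        (if k % 2 = 0 then Set.Iio (bpick M (bscheme M n (k / 2)))
         else Set.Ioi (bpick M (bscheme M n (k / 2))))

private lemma bscheme_even (M : Set ℝ) (n k : ℕ) :
    bscheme M (n+1) (2*k) = bscheme M n k ∩ Set.Iio (bpick M (bscheme M n k)) := by
  have h2 : 2*k/2 = k := by omega
  have h3 : 2*k % 2 = 0 := by omega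
  rw [bscheme, h2, if_pos h3]

private lemma bscheme_odd (M : Set ℝ) (n k : ℕ) :
    bscheme M (n+1) (2*k+1) = bscheme M n k ∩ Set.Ioi (bpick M (bscheme M n k)) := by
  have h2 : (2*k+1)/2 = k := by omega
  have h3 : (2*k+1) % 2 = 1 := by omega
  rw [bscheme, h2, h3]
  norm_num

private lemma bscheme_succ_subset (M : Set ℝ) (n k : ℕ) :
    bscheme M (n+1) k ⊆ bscheme M n (k/2) := by
  rw [bscheme]; exact Set.inter_subset_left

private lemma bscheme_subset (M : Set ℝ) (n k : ℕ) :
    bscheme M n k ⊆ M ∩ Set.Ioi (bpick M M) := by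
  induction n generalizing k with
  | zero => rw [bscheme]
  | succ n ih => exact (bscheme_succ_subset M n k).trans (ih (k/2))

/-- descend along leftmost children -/
private lemma bscheme_descend (M : Set ℝ) (m n k : ℕ) :
    bscheme M (n+m) (k * 2^m) ⊆ bscheme M n k := by
  induction m with
  | zero => simp
  | succ m ih =>
      have h2 : k * 2^(m+1) / 2 = k * 2^m := by
        have h3 : k * 2^(m+1) = (k * 2^m) * 2 := by ring
        rw [h3, Nat.mul_div_cancel _ two_pos]
      exact (h2 ▸ bscheme_succ_subset M (n+m) (k * 2^(m+1))).trans ih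

/-- same-level order separation -/
private lemma bscheme_sep (M : Set ℝ) : ∀ (n k k' : ℕ), k < k' → k' < 2^n →
    ∀ x ∈ bscheme M n k, ∀ y ∈ bscheme M n k', x < y := by
  intro n
  induction n with
  | zero =>
      intro k k' hkk hk2 x hx y hy
      omega
  | succ n ih =>
      intro k k' hkk hk2 x hx y hy
      have hk2' : k'/2 < 2^n := by
        rw [pow_succ] at hk2; omega
      rcases lt_or_ge (k/2) (k'/2) with h | h
      · exact ih (k/2) (k'/2) h hk2' x (bscheme_succ_subset M n k hx) y
          (bscheme_succ_subset M n k' hy)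
      · have hk : k = 2*(k/2) := by omega
        have hk' : k' = 2*(k/2)+1 := by omega
        rw [hk, bscheme_even] at hx
        rw [hk', bscheme_odd] at hy
        exact lt_trans hx.2 hy.2
private lemma bscheme_unc {M : Set ℝ} (hsub : M ⊆ Set.Icc 0 1)
    (hclosed : IsClosed M) (hunc : ¬ M.Countable) :
    ∀ n k, k < 2^n → ¬(bscheme M n k).Countable := by
  intro n
  induction n with
  | zero =>
      intro k _
      rw [bscheme]
      exact (bpick_spec (split_exists M hsub hclosed M subset_rfl hunc)).2.2
  | succ n ih =>
      intro k hk
      have hk2 : k/2 < 2^n := by rw [pow_succ] at hk; omega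
      have hparunc := ih (k/2) hk2
      have hparM : bscheme M n (k/2) ⊆ M :=
        (bscheme_subset M n (k/2)).trans Set.inter_subset_left
      have hspec := bpick_spec (split_exists M hsub hclosed _ hparM hparunc)
      rcases Nat.even_or_odd k with he | ho
      · have hkk : k = 2*(k/2) := by
          rcases he with ⟨j, hj⟩; omega
        rw [hkk, bscheme_even]
        exact hspec.2.1
      · have hkk : k = 2*(k/2)+1 := by
          rcases ho with ⟨j, hj⟩; omega
        rw [hkk, bscheme_odd]
        exact hspec.2.2

private lemma bscheme_pick_spec {M : Set ℝ} (hsub : M ⊆ Set.Icc 0 1)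
    (hclosed : IsClosed M) (hunc : ¬ M.Countable) {n k : ℕ} (hk : k < 2^n) :
    bpick M (bscheme M n k) ∈ M ∧
      ¬(bscheme M n k ∩ Set.Iio (bpick M (bscheme M n k))).Countable ∧
      ¬(bscheme M n k ∩ Set.Ioi (bpick M (bscheme M n k))).Countable :=
  bpick_spec (split_exists M hsub hclosed _
    ((bscheme_subset M n k).trans Set.inter_subset_left)
    (bscheme_unc hsub hclosed hunc n k hk))

private lemma base_lt {M : Set ℝ} (hsub : M ⊆ Set.Icc 0 1)
    (hclosed : IsClosed M) (hunc : ¬ M.Countable) {n k : ℕ} (hk : k < 2^n) :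
    bpick M M < bpick M (bscheme M n k) := by
  obtain ⟨b, hb⟩ := not_countable_nonempty
    (bscheme_pick_spec hsub hclosed hunc hk).2.1
  have h1 : bpick M M < b := (bscheme_subset M n k hb.1).2
  exact lt_trans h1 hb.2

private lemma gmono {M : Set ℝ} (hsub : M ⊆ Set.Icc 0 1)
    (hclosed : IsClosed M) (hunc : ¬ M.Countable) {n k n' k' : ℕ}
    (hk : k < 2^n) (hk' : k' < 2^n') (h : (k+1) * 2^n' ≤ k' * 2^n) :
    bpick M (bscheme M n k) < bpick M (bscheme M n' k') := by
  set N := max n n' + 1 with hN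
  have hN1 : n + 1 ≤ N := by omega
  have hN2 : n' + 1 ≤ N := by omega
  set j₁ := (2*k+1) * 2^(N-(n+1)) with hj₁
  set j₂ := (2*k') * 2^(N-(n'+1)) with hj₂
  have hpow1 : 2^(n+1) * 2^(N-(n+1)) = 2^N := by rw [← pow_add]; congr 1; omega
  have hpow2 : 2^(n'+1) * 2^(N-(n'+1)) = 2^N := by rw [← pow_add]; congr 1; omega
  have hj₁lt : j₁ < 2^N := by
    rw [hj₁, ← hpow1]
    exact (Nat.mul_lt_mul_right (by positivity)).2
      (by rw [pow_succ]; omega)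
  have hj₂lt : j₂ < 2^N := by
    rw [hj₂, ← hpow2]
    exact (Nat.mul_lt_mul_right (by positivity)).2
      (by rw [pow_succ]; omega)
  have hmid : (k+1) * 2^(N-n) ≤ k' * 2^(N-n') := by
    have e1 : (k+1) * 2^(N-n) * 2^(n+n') = ((k+1) * 2^n') * 2^N := by
      rw [mul_assoc, mul_assoc, ← pow_add, ← pow_add]
      congr 2
      omega
    have e2 : k' * 2^(N-n') * 2^(n+n') = (k' * 2^n) * 2^N := by
      rw [mul_assoc, mul_assoc, ← pow_add, ← pow_add]
      congr 2
      omega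
    have h3 : ((k+1) * 2^n') * 2^N ≤ (k' * 2^n) * 2^N :=
      Nat.mul_le_mul_right _ h
    rw [← e1, ← e2] at h3
    exact Nat.le_of_mul_le_mul_right h3 (by positivity)
  have e3 : (2*k+2) * 2^(N-(n+1)) = (k+1) * 2^(N-n) := by
    have e : (2*k+2) * 2^(N-(n+1)) = (k+1) * (2 * 2^(N-(n+1))) := by ring
    rw [e, ← pow_succ']
    congr 2
    omega
  have e4 : j₂ = k' * 2^(N-n') := by
    have e : (2*k') * 2^(N-(n'+1)) = k' * (2 * 2^(N-(n'+1))) := by ring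
    rw [hj₂, e, ← pow_succ']
    congr 2
    omega
  have hj : j₁ < j₂ := by
    calc j₁ < (2*k+2) * 2^(N-(n+1)) :=
          (Nat.mul_lt_mul_right (by positivity)).2 (by omega)
      _ = (k+1) * 2^(N-n) := e3
      _ ≤ k' * 2^(N-n') := hmid
      _ = j₂ := e4.symm
  obtain ⟨a, ha⟩ := not_countable_nonempty
    (bscheme_unc hsub hclosed hunc N j₁ hj₁lt)
  obtain ⟨b, hb⟩ := not_countable_nonempty
    (bscheme_unc hsub hclosed hunc N j₂ hj₂lt)
  have hd1 := bscheme_descend M (N-(n+1)) (n+1) (2*k+1)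
  have hd2 := bscheme_descend M (N-(n'+1)) (n'+1) (2*k')
  have heq1 : (n+1) + (N-(n+1)) = N := by omega
  have heq2 : (n'+1) + (N-(n'+1)) = N := by omega
  rw [heq1] at hd1
  rw [heq2] at hd2
  have ha2 := hd1 ha
  have hb2 := hd2 hb
  rw [bscheme_odd] at ha2
  rw [bscheme_even] at hb2
  have hab : a < b := bscheme_sep M N j₁ j₂ hj hj₂lt a ha b hb
  exact lt_trans (lt_trans ha2.2 hab) hb2.2
private def bG (M : Set ℝ) (x : ℝ) : Set ℝ :=
  insert (bpick M M)
    {y | ∃ n k : ℕ, k < 2^n ∧ ((k:ℝ)+1) ≤ x * 2^n ∧ y = bpick M (bscheme M n k)}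

/-- If `M` is an uncountable closed subset of `[0,1]`, then there is a strictly
increasing function from `[0,1]` into `M`. -/
theorem strictMono_into_uncountable_closed (M : Set ℝ)
    (hsub : M ⊆ Set.Icc 0 1) (hclosed : IsClosed M) (hunc : ¬ M.Countable) :
    ∃ f : Set.Icc (0:ℝ) 1 → ℝ, StrictMono f ∧ ∀ x, f x ∈ M := by
  have hbase : bpick M M ∈ M :=
    (bpick_spec (split_exists M hsub hclosed M subset_rfl hunc)).1
  have hGsub : ∀ x : ℝ, bG M x ⊆ M := by
    intro x z hz
    rcases hz with rfl | ⟨n, k, hk, _, rfl⟩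
    · exact hbase
    · exact (bscheme_pick_spec hsub hclosed hunc hk).1
  have hGne : ∀ x : ℝ, (bG M x).Nonempty := fun x => ⟨bpick M M, Set.mem_insert _ _⟩
  have hGbdd : ∀ x : ℝ, BddAbove (bG M x) :=
    fun x => ⟨1, fun z hz => (hsub (hGsub x hz)).2⟩
  refine ⟨fun x => sSup (bG M x.1), ?_, ?_⟩
  · intro x y hxy
    have hx0 : (0:ℝ) ≤ x.1 := x.2.1
    have hy1 : y.1 ≤ 1 := y.2.2
    have hxy' : x.1 < y.1 := hxy
    -- find n with 3 < (y-x)*2^n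
    obtain ⟨n, hn⟩ := pow_unbounded_of_one_lt (3/(y.1-x.1)) (one_lt_two (α := ℝ))
    have hyx : (0:ℝ) < y.1 - x.1 := by linarith
    have h3 : (3:ℝ) < (y.1 - x.1) * 2^n := by
      rw [div_lt_iff₀ hyx] at hn
      linarith [hn]
    set k := ⌈x.1 * 2^n⌉₊ with hkdef
    have hpw : (0:ℝ) < 2^n := by positivity
    have hxk : x.1 * 2^n ≤ (k:ℝ) := Nat.le_ceil _
    have hkx : (k:ℝ) < x.1 * 2^n + 1 :=
      Nat.ceil_lt_add_one (by positivity)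
    have hk2r : (k:ℝ) + 2 ≤ y.1 * 2^n := by nlinarith
    have hk2n : k + 2 ≤ 2^n := by
      have : (k:ℝ) + 2 ≤ 2^n := by nlinarith
      exact_mod_cast this
    have hk1 : k + 1 < 2^n := by omega
    have hklt : k < 2^n := by omega
    -- two elements of bG M y.1
    have mem1 : bpick M (bscheme M n k) ∈ bG M y.1 :=
      Set.mem_insert_of_mem _ ⟨n, k, hklt, by linarith, rfl⟩
    have mem2 : bpick M (bscheme M n (k+1)) ∈ bG M y.1 := by
      refine Set.mem_insert_of_mem _ ⟨n, k+1, hk1, ?_, rfl⟩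
      push_cast
      linarith
    -- everything in bG M x.1 is < bpick M (bscheme M n k)
    have hub : ∀ z ∈ bG M x.1, z < bpick M (bscheme M n k) := by
      intro z hz
      rcases hz with rfl | ⟨n', k', hk', hle, rfl⟩
      · exact base_lt hsub hclosed hunc hklt
      · refine gmono hsub hclosed hunc hk' hklt ?_
        have hr : ((k':ℝ)+1) * 2^n ≤ (k:ℝ) * 2^n' := by
          have h1 : ((k':ℝ)+1) ≤ x.1 * 2^n' := hle
          have hpw' : (0:ℝ) < 2^n' := by positivity
          nlinarith
        have : ((k'+1) * 2^n : ℝ) ≤ ((k * 2^n' : ℕ) : ℝ) := by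
          push_cast
          linarith
        exact_mod_cast this
    calc sSup (bG M x.1) ≤ bpick M (bscheme M n k) :=
          csSup_le (hGne x.1) (fun z hz => le_of_lt (hub z hz))
      _ < bpick M (bscheme M n (k+1)) :=
          gmono hsub hclosed hunc hklt hk1 le_rfl
      _ ≤ sSup (bG M y.1) := le_csSup (hGbdd y.1) mem2
  · intro x
    have h1 : sSup (bG M x.1) ∈ closure (bG M x.1) :=
      csSup_mem_closure (hGne x.1) (hGbdd x.1)
    have h2 : closure (bG M x.1) ⊆ closure M := closure_mono (hGsub x.1)
    exact (h2.trans hclosed.closure_subset) h1
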